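/- With γ₁ = a₂a₃⁻¹ and γ₂ = a₃⁻¹a₂ in G = ⟨⟨a₁,a₃⟩⟩ ⊂ Aut(T), one has γ₁γ₂ = γ₂γ₁; consequently the subgroup U = ⟨⟨γ₁, γ₂⟩⟩ is abelian. -/

import Mathlib

open Equiv

/-- Vertices of the infinite rooted binary tree: finite words over `Bool`.
The parent of a nonempty word is `dropLast`. -/
abbrev Wd := List Bool

/-- The group `Ω = Aut(T)` of automorphisms of the infinite rooted binary tree,
realized as the subgroup of permutations of the vertex set preserving length
(levels) and the parent relation. -/
def OmegaSG : Subgroup (Equiv.Perm Wd) where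
  carrier := {σ | (∀ w, (σ w).length = w.length) ∧ ∀ w, (σ w).dropLast = σ w.dropLast}
  one_mem' := ⟨fun _ => rfl, fun _ => rfl⟩
  mul_mem' := by
    rintro σ τ ⟨hσl, hσd⟩ ⟨hτl, hτd⟩
    refine ⟨fun w => ?_, fun w => ?_⟩
    · simp [Equiv.Perm.mul_apply, hσl, hτl]
    · simp [Equiv.Perm.mul_apply, hσd, hτd]
  inv_mem' := by
    rintro σ ⟨hl, hd⟩
    refine ⟨fun w => ?_, fun w => ?_⟩
    · have := hl (σ⁻¹ w)
      rw [Equiv.Perm.inv_def, Equiv.apply_symm_apply] at this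
      exact this.symm
    · apply σ.injective
      have := hd (σ⁻¹ w)
      rw [show σ (σ⁻¹ w) = w from σ.apply_symm_apply w] at this
      rw [← this]
      simp

/-- The section pairing: `(u,v)` acts as `u` on the subtree rooted at `false`
and as `v` on the subtree rooted at `true`. -/
def pairFun (f g : Wd → Wd) : Wd → Wd
  | [] => []
  | false :: w => false :: f w
  | true :: w => true :: g w

@[simp] lemma pairFun_nil (f g : Wd → Wd) : pairFun f g [] = [] := rfl
@[simp] lemma pairFun_false (f g : Wd → Wd) (w : Wd) :
    pairFun f g (false :: w) = false :: f w := rfl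
@[simp] lemma pairFun_true (f g : Wd → Wd) (w : Wd) :
    pairFun f g (true :: w) = true :: g w := rfl

lemma pairFun_comp (f g f' g' : Wd → Wd) (hf : ∀ w, f (f' w) = w) (hg : ∀ w, g (g' w) = w) :
    ∀ w, pairFun f g (pairFun f' g' w) = w := by
  rintro (_ | ⟨(_|_), w⟩) <;> simp [hf, hg]

/-- The permutation `(u,v)` of the tree. -/
def pairPerm (u v : Equiv.Perm Wd) : Equiv.Perm Wd where
  toFun := pairFun u v
  invFun := pairFun u.symm v.symm
  left_inv := pairFun_comp _ _ _ _ (fun w => u.symm_apply_apply w) (fun w => v.symm_apply_apply w)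
  right_inv := pairFun_comp _ _ _ _ (fun w => u.apply_symm_apply w) (fun w => v.apply_symm_apply w)

@[simp] lemma pairPerm_apply (u v : Equiv.Perm Wd) (w : Wd) :
    pairPerm u v w = pairFun u v w := rfl

/-- The first-level swap `σ`. -/
def swapPerm : Equiv.Perm Wd where
  toFun w := match w with | [] => [] | b :: w => (!b) :: w
  invFun w := match w with | [] => [] | b :: w => (!b) :: w
  left_inv := by rintro (_ | ⟨b, w⟩) <;> simp
  right_inv := by rintro (_ | ⟨b, w⟩) <;> simp

@[simp] lemma swapPerm_nil : swapPerm [] = [] := rfl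
@[simp] lemma swapPerm_cons (b : Bool) (w : Wd) : swapPerm (b :: w) = (!b) :: w := rfl

lemma swapPerm_mem : swapPerm ∈ OmegaSG := by
  constructor
  · rintro (_ | ⟨b, w⟩) <;> simp
  · rintro (_ | ⟨b, w⟩)
    · simp
    · rcases eq_or_ne w [] with rfl | hw
      · simp
      · simp only [swapPerm_cons, List.dropLast_cons_of_ne_nil hw]

lemma mem_omega_length {u : Equiv.Perm Wd} (hu : u ∈ OmegaSG) (w : Wd) :
    (u w).length = w.length := hu.1 w

lemma mem_omega_ne_nil {u : Equiv.Perm Wd} (hu : u ∈ OmegaSG) {w : Wd} (hw : w ≠ []) :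
    u w ≠ [] := by
  intro h
  exact hw (List.eq_nil_of_length_eq_zero (by rw [← hu.1 w, h]; rfl))

lemma mem_omega_nil {u : Equiv.Perm Wd} (hu : u ∈ OmegaSG) : u [] = [] :=
  List.eq_nil_of_length_eq_zero (hu.1 [])

lemma pairPerm_mem {u v : Equiv.Perm Wd} (hu : u ∈ OmegaSG) (hv : v ∈ OmegaSG) :
    pairPerm u v ∈ OmegaSG := by
  constructor
  · rintro (_ | ⟨(_|_), w⟩) <;> simp [hu.1, hv.1]
  · rintro (_ | ⟨(_|_), w⟩)
    · simp
    · rcases eq_or_ne w [] with rfl | hw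
      · simp [mem_omega_nil hu]
      · simp only [pairPerm_apply, pairFun_false, List.dropLast_cons_of_ne_nil hw,
          List.dropLast_cons_of_ne_nil (mem_omega_ne_nil hu hw)]
        rw [hu.2]
    · rcases eq_or_ne w [] with rfl | hw
      · simp [mem_omega_nil hv]
      · simp only [pairPerm_apply, pairFun_true, List.dropLast_cons_of_ne_nil hw,
          List.dropLast_cons_of_ne_nil (mem_omega_ne_nil hv hw)]
        rw [hv.2]

/-- `(u,v)` as an element of `Ω`. -/
def pairOm (u v : OmegaSG) : OmegaSG := ⟨pairPerm u.1 v.1, pairPerm_mem u.2 v.2⟩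

/-- `σ` as an element of `Ω`. -/
def swapOm : OmegaSG := ⟨swapPerm, swapPerm_mem⟩

/-! ### Levels, restriction, sign, odometers -/

/-- Level `n` of the tree: words of length `n`. -/
abbrev Lv (n : ℕ) := {w : Wd // w.length = n}

instance fintypeLv (n : ℕ) : Fintype (Lv n) := by
  apply Fintype.ofSurjective (fun g : Fin n → Bool => (⟨List.ofFn g, List.length_ofFn (f := g)⟩ : Lv n))
  rintro ⟨w, rfl⟩
  exact ⟨w.get, Subtype.ext (List.ofFn_get w)⟩

/-- The permutation induced by `g ∈ Ω` on level `n`. -/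
def levelPerm (n : ℕ) (g : OmegaSG) : Equiv.Perm (Lv n) where
  toFun w := ⟨g.1 w.1, by rw [mem_omega_length g.2, w.2]⟩
  invFun w := ⟨(g⁻¹ : OmegaSG).1 w.1, by rw [mem_omega_length (g⁻¹ : OmegaSG).2, w.2]⟩
  left_inv w := Subtype.ext (by simp)
  right_inv w := Subtype.ext (by simp)

/-- Restriction to level `n` as a group homomorphism. -/
def levelHom (n : ℕ) : OmegaSG →* Equiv.Perm (Lv n) where
  toFun := levelPerm n
  map_one' := Equiv.ext fun w => Subtype.ext rfl
  map_mul' g h := Equiv.ext fun w => Subtype.ext rfl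

/-- `sgn_n`: the sign of the permutation induced on level `n`. -/
noncomputable def sgn (n : ℕ) (g : OmegaSG) : ℤˣ := Equiv.Perm.sign (levelPerm n g)

/-- An odometer: an element acting transitively on every level of the tree. -/
def IsOdometer (g : OmegaSG) : Prop :=
  ∀ n : ℕ, ∀ v w : Lv n, ∃ k : ℤ, ((g ^ k : OmegaSG) : Equiv.Perm Wd) v.1 = w.1

/-! ### The profinite topology on `Aut(T)` -/

instance : TopologicalSpace Wd := ⊥
instance : DiscreteTopology Wd := ⟨rfl⟩
instance : TopologicalSpace (Equiv.Perm Wd) :=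
  TopologicalSpace.induced (fun g => (g : Wd → Wd)) Pi.topologicalSpace

lemma continuous_permCoe : Continuous (fun g : Equiv.Perm Wd => (g : Wd → Wd)) :=
  continuous_induced_dom

lemma continuous_permApply (w : Wd) : Continuous fun g : Equiv.Perm Wd => g w :=
  (continuous_apply w).comp continuous_permCoe

instance : IsTopologicalGroup (Equiv.Perm Wd) where
  continuous_mul := by
    apply continuous_induced_rng.2
    apply continuous_pi
    intro w
    rw [continuous_discrete_rng]
    intro y
    have h : (fun p : Equiv.Perm Wd × Equiv.Perm Wd => ((p.1 * p.2 : Equiv.Perm Wd) : Wd → Wd) w) ⁻¹' {y}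
        = ⋃ x : Wd, {p : Equiv.Perm Wd × Equiv.Perm Wd | p.2 w = x} ∩ {p | p.1 x = y} := by
      ext p
      simp only [Set.mem_preimage, Set.mem_singleton_iff, Set.mem_iUnion, Set.mem_inter_iff,
        Set.mem_setOf_eq, Equiv.Perm.mul_apply]
      constructor
      · intro hh; exact ⟨p.2 w, rfl, hh⟩
      · rintro ⟨x, rfl, hh⟩; exact hh
    show IsOpen ((fun p : Equiv.Perm Wd × Equiv.Perm Wd =>
      ((p.1 * p.2 : Equiv.Perm Wd) : Wd → Wd) w) ⁻¹' {y})
    rw [h]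
    refine isOpen_iUnion fun x => IsOpen.inter ?_ ?_
    · exact IsOpen.preimage ((continuous_permApply w).comp continuous_snd) (isOpen_discrete {x})
    · exact IsOpen.preimage ((continuous_permApply x).comp continuous_fst) (isOpen_discrete {y})
  continuous_inv := by
    apply continuous_induced_rng.2
    apply continuous_pi
    intro w
    rw [continuous_discrete_rng]
    intro y
    have h : (fun g : Equiv.Perm Wd => ((g⁻¹ : Equiv.Perm Wd) : Wd → Wd) w) ⁻¹' {y}
        = {g : Equiv.Perm Wd | g y = w} := by
      ext g
      simp only [Set.mem_preimage, Set.mem_singleton_iff, Set.mem_setOf_eq]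
      constructor
      · rintro rfl; simp
      · intro hh; rw [← hh]; simp
    show IsOpen ((fun g : Equiv.Perm Wd => ((g⁻¹ : Equiv.Perm Wd) : Wd → Wd) w) ⁻¹' {y})
    rw [h]
    exact IsOpen.preimage (continuous_permApply y) (isOpen_discrete {w})

/-! ### The recursive generators `a₁ = σ`, `a₂ = (a₃⁻¹, a₂⁻¹)σ`, `a₃ = (a₂, a₃)` -/

mutual
  /-- The underlying function of `a₂`. -/
  def pA : Wd → Wd
    | [] => []
    | false :: w => true :: piA w
    | true :: w => false :: qiA w
  /-- The underlying function of `a₃`. -/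
  def qA : Wd → Wd
    | [] => []
    | false :: w => false :: pA w
    | true :: w => true :: qA w
  /-- The underlying function of `a₂⁻¹`. -/
  def piA : Wd → Wd
    | [] => []
    | false :: w => true :: qA w
    | true :: w => false :: pA w
  /-- The underlying function of `a₃⁻¹`. -/
  def qiA : Wd → Wd
    | [] => []
    | false :: w => false :: piA w
    | true :: w => true :: qiA w
end

lemma a_inv_lemma : ∀ w : Wd, pA (piA w) = w ∧ piA (pA w) = w ∧ qA (qiA w) = w ∧ qiA (qA w) = w := by
  intro w
  induction w with
  | nil => simp [pA, qA, piA, qiA]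
  | cons b w ih =>
    cases b <;>
      simp [pA, qA, piA, qiA, ih.1, ih.2.1, ih.2.2.1, ih.2.2.2]

/-- The generator `a₂`. -/
def a2 : Equiv.Perm Wd where
  toFun := pA
  invFun := piA
  left_inv w := (a_inv_lemma w).2.1
  right_inv w := (a_inv_lemma w).1

/-- The generator `a₃`. -/
def a3 : Equiv.Perm Wd where
  toFun := qA
  invFun := qiA
  left_inv w := (a_inv_lemma w).2.2.2
  right_inv w := (a_inv_lemma w).2.2.1

lemma a_length_lemma : ∀ w : Wd, (pA w).length = w.length ∧ (qA w).length = w.length ∧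
    (piA w).length = w.length ∧ (qiA w).length = w.length := by
  intro w
  induction w with
  | nil => simp [pA, qA, piA, qiA]
  | cons b w ih =>
    cases b <;>
      simp [pA, qA, piA, qiA, ih.1, ih.2.1, ih.2.2.1, ih.2.2.2]

lemma a_ne_nil {f : Wd → Wd} (hf : ∀ w : Wd, (f w).length = w.length) {w : Wd} (hw : w ≠ []) :
    f w ≠ [] := by
  intro h
  exact hw (List.eq_nil_of_length_eq_zero (by rw [← hf w, h]; rfl))

lemma a_dropLast_lemma : ∀ w : Wd, (pA w).dropLast = pA w.dropLast ∧
    (qA w).dropLast = qA w.dropLast ∧ (piA w).dropLast = piA w.dropLast ∧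
    (qiA w).dropLast = qiA w.dropLast := by
  intro w
  induction w with
  | nil => simp [pA, qA, piA, qiA]
  | cons b w ih =>
    rcases eq_or_ne w [] with rfl | hw
    · cases b <;> simp [pA, qA, piA, qiA]
    · have hp := a_ne_nil (fun w => (a_length_lemma w).1) hw
      have hq := a_ne_nil (fun w => (a_length_lemma w).2.1) hw
      have hpi := a_ne_nil (fun w => (a_length_lemma w).2.2.1) hw
      have hqi := a_ne_nil (fun w => (a_length_lemma w).2.2.2) hw
      cases b <;>
        simp [pA, qA, piA, qiA, List.dropLast_cons_of_ne_nil hw,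
          List.dropLast_cons_of_ne_nil hp, List.dropLast_cons_of_ne_nil hq,
          List.dropLast_cons_of_ne_nil hpi, List.dropLast_cons_of_ne_nil hqi,
          ih.1, ih.2.1, ih.2.2.1, ih.2.2.2]

lemma a2_mem : a2 ∈ OmegaSG :=
  ⟨fun w => (a_length_lemma w).1, fun w => (a_dropLast_lemma w).1⟩

lemma a3_mem : a3 ∈ OmegaSG :=
  ⟨fun w => (a_length_lemma w).2.1, fun w => (a_dropLast_lemma w).2.1⟩

/-- `a₁ = σ` as an element of `Ω`. -/
def A1 : OmegaSG := swapOm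
/-- `a₂` as an element of `Ω`. -/
def A2 : OmegaSG := ⟨a2, a2_mem⟩
/-- `a₃` as an element of `Ω`. -/
def A3 : OmegaSG := ⟨a3, a3_mem⟩

/-- `G = ⟨⟨a₁, a₃⟩⟩`, the topological closure of the subgroup generated by `a₁` and `a₃`:
a model of the geometric iterated monodromy group of `f(x) = 2/(x-1)²`. -/
noncomputable def Ggrp : Subgroup OmegaSG :=
  (Subgroup.closure {A1, A3}).topologicalClosure

/-- The normal closure in `G` of the closed subgroup generated by an element `c`:
the closed subgroup generated by all `G`-conjugates of `c`. -/
noncomputable def nclG (c : OmegaSG) : Subgroup OmegaSG :=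
  (Subgroup.closure {x | ∃ g ∈ Ggrp, x = g * c * g⁻¹}).topologicalClosure

/-- `U`, the normal closure in `G` of `⟨⟨a₂a₃⁻¹⟩⟩`. -/
noncomputable def Ugrp : Subgroup OmegaSG := nclG (A2 * A3⁻¹)

/-- `H₁`, the normal closure in `G` of `⟨⟨a₁⟩⟩`. -/
noncomputable def H1grp : Subgroup OmegaSG := nclG A1

/-- `H₃`, the normal closure in `G` of `⟨⟨a₃⟩⟩`. -/
noncomputable def H3grp : Subgroup OmegaSG := nclG A3

section Lemmas

open Equiv

lemma a2_apply (w : Wd) : a2 w = pA w := rfl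
lemma a3_apply (w : Wd) : a3 w = qA w := rfl
lemma a2_inv_apply (w : Wd) : a2⁻¹ w = piA w := rfl
lemma a3_inv_apply (w : Wd) : a3⁻¹ w = qiA w := rfl

lemma pA_piA : ∀ w : Wd, pA (piA w) = w := fun w => (a_inv_lemma w).1
lemma piA_pA : ∀ w : Wd, piA (pA w) = w := fun w => (a_inv_lemma w).2.1
lemma qA_qiA : ∀ w : Wd, qA (qiA w) = w := fun w => (a_inv_lemma w).2.2.1
lemma qiA_qA : ∀ w : Wd, qiA (qA w) = w := fun w => (a_inv_lemma w).2.2.2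

lemma ss : ∀ w : Wd, swapPerm (swapPerm w) = w := by
  rintro (_ | ⟨b, w⟩) <;> simp

lemma R2 : swapPerm * swapPerm = (1 : Equiv.Perm Wd) := by
  apply Equiv.ext; intro w
  simpa using ss w

-- pA ∘ qA = swap
lemma pAqA : ∀ w : Wd, pA (qA w) = swapPerm w := by
  rintro (_ | ⟨(_|_), w⟩) <;> simp [pA, qA, piA_pA, qiA_qA, pA_piA, qA_qiA]

lemma R1 : a2 * a3 = (swapPerm : Equiv.Perm Wd) := by
  apply Equiv.ext; intro w
  simpa [a2_apply, a3_apply] using pAqA w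

-- qiA ∘ piA = swap
lemma qiA_piA_eq : ∀ w : Wd, qiA (piA w) = swapPerm w := by
  rintro (_ | ⟨(_|_), w⟩) <;> simp [piA, qiA, piA_pA, qiA_qA, pA_piA, qA_qiA]

lemma piA_s_qiA : ∀ w : Wd, piA (swapPerm (qiA w)) = w := by
  rintro (_ | ⟨(_|_), w⟩) <;> simp [piA, qiA, piA_pA, qiA_qA, pA_piA, qA_qiA]

lemma pA4 : ∀ w : Wd, pA (pA (pA (pA w))) = w := by
  rintro (_ | ⟨(_|_), w⟩) <;>
    simp [pA, qiA_piA_eq, ss, piA_s_qiA]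

lemma qA4 : ∀ w : Wd, qA (qA (qA (qA w))) = w := by
  intro w
  induction w with
  | nil => rfl
  | cons b v ih => cases b <;> simp [qA, pA4, ih]

end Lemmas

lemma R3 : a2 ^ 4 = (1 : Equiv.Perm Wd) := by
  apply Equiv.ext; intro w
  have : (a2 ^ 4) w = pA (pA (pA (pA w))) := by
    simp [pow_succ, Equiv.Perm.mul_apply, a2_apply]
  rw [this, pA4]; rfl

lemma R4 : a3 ^ 4 = (1 : Equiv.Perm Wd) := by
  apply Equiv.ext; intro w
  have : (a3 ^ 4) w = qA (qA (qA (qA w))) := by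
    simp [pow_succ, Equiv.Perm.mul_apply, a3_apply]
  rw [this, qA4]; rfl

lemma q2 : ∀ w : Wd, qiA (qiA w) = qA (qA w) := by
  intro w
  conv_lhs => rw [← qA4 w]
  simp [qiA_qA]

lemma p2 : ∀ w : Wd, piA (piA w) = pA (pA w) := by
  intro w
  conv_lhs => rw [← pA4 w]
  simp [piA_pA]

lemma p3 : ∀ w : Wd, piA (piA (piA w)) = pA w := by
  intro w
  conv_lhs => rw [← pA4 w]
  simp [piA_pA]

lemma pA_eq : ∀ w : Wd, pA w = swapPerm (qiA w) := by
  rintro (_ | ⟨(_|_), w⟩) <;> simp [pA, qiA]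

lemma piA_eq : ∀ w : Wd, piA w = qA (swapPerm w) := by
  rintro (_ | ⟨(_|_), w⟩) <;> simp [piA, qA]

lemma P1 : ∀ v : Wd, piA (qiA (piA (piA v))) = qiA (qiA (swapPerm v)) := by
  rintro (_ | ⟨(_|_), w⟩)
  · rfl
  · -- false :: w
    simp only [piA, qiA, swapPerm_cons, Bool.not_false]
    rw [piA_pA, ← q2]
  · -- true :: w
    simp only [piA, qiA, swapPerm_cons, Bool.not_true]
    rw [qiA_qA, p2]

lemma P2 : ∀ v : Wd, piA (piA (piA (qiA v))) = swapPerm (qiA (qiA v)) := fun v =>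
  (p3 (qiA v)).trans (pA_eq (qiA v))

lemma Kpt : ∀ w : Wd, qiA (qiA (swapPerm (pA (pA w)))) = pA (pA (swapPerm (qiA (qiA w)))) := by
  rintro (_ | ⟨(_|_), w⟩)
  · rfl
  · simp only [pA, qiA, swapPerm_cons, Bool.not_true, Bool.not_false]
    rw [P1, qiA_piA_eq]
  · simp only [pA, qiA, swapPerm_cons, Bool.not_true, Bool.not_false]
    rw [P2, qiA_piA_eq]

lemma K' : a3⁻¹ * (a3⁻¹ * (swapPerm * (a2 * a2))) = a2 * (a2 * (swapPerm * (a3⁻¹ * a3⁻¹))) := by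
  apply Equiv.ext; intro w
  simpa [Equiv.Perm.mul_apply, a2_apply, a3_inv_apply] using Kpt w

lemma sinv : (swapPerm : Equiv.Perm Wd)⁻¹ = swapPerm := inv_eq_of_mul_eq_one_right R2

lemma s2x : ∀ x : Equiv.Perm Wd, swapPerm * (swapPerm * x) = x := fun x => by
  rw [← mul_assoc, R2, one_mul]

lemma hA2 : a2 = swapPerm * a3⁻¹ := by
  rw [← R1, mul_assoc, mul_inv_cancel, mul_one]

lemma hA3i : a3⁻¹ = swapPerm * a2 := by
  rw [hA2, ← mul_assoc, R2, one_mul]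

lemma a2inv : a2⁻¹ = a3 * swapPerm := by
  rw [hA2, mul_inv_rev, inv_inv, sinv]

lemma yy : a3⁻¹ * a3⁻¹ = a3 * a3 := by
  have h3 : a3⁻¹ = a3 ^ 3 := by
    refine inv_eq_of_mul_eq_one_right ?_
    have : a3 * a3 ^ 3 = a3 ^ 4 := by group
    rw [this, R4]
  rw [h3]
  have : a3 ^ 3 * a3 ^ 3 = a3 ^ 4 * (a3 * a3) := by group
  rw [this, R4, one_mul]

lemma a2a : a2⁻¹ * a2⁻¹ = a2 * a2 := by
  have h3 : a2⁻¹ = a2 ^ 3 := by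
    refine inv_eq_of_mul_eq_one_right ?_
    have : a2 * a2 ^ 3 = a2 ^ 4 := by group
    rw [this, R3]
  rw [h3]
  have : a2 ^ 3 * a2 ^ 3 = a2 ^ 4 * (a2 * a2) := by group
  rw [this, R3, one_mul]

lemma h1e : a2 * a3⁻¹ = swapPerm * (a3⁻¹ * a3⁻¹) := by
  rw [hA2, mul_assoc]

lemma h2e : a3⁻¹ * a2 = swapPerm * (a2 * a2) := by
  conv_lhs => rw [hA3i, mul_assoc]

lemma commP : (a2 * a3⁻¹) * (a3⁻¹ * a2) = (a3⁻¹ * a2) * (a2 * a3⁻¹) := by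
  rw [h1e, h2e]
  simp only [mul_assoc]
  rw [K']

lemma c1 : swapPerm * (a2 * a3⁻¹) * swapPerm⁻¹ = (a2 * a3⁻¹)⁻¹ := by
  rw [sinv, h1e]
  have h : swapPerm * (swapPerm * (a3⁻¹ * a3⁻¹)) * swapPerm
      = (swapPerm * swapPerm) * (a3⁻¹ * a3⁻¹ * swapPerm) := by group
  rw [h, R2, one_mul, yy, mul_inv_rev, sinv, mul_inv_rev, yy]

lemma c2 : swapPerm * (a3⁻¹ * a2) * swapPerm⁻¹ = (a3⁻¹ * a2)⁻¹ := by
  rw [sinv, h2e]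
  have h : swapPerm * (swapPerm * (a2 * a2)) * swapPerm = (a2 * a2) * swapPerm := by
    rw [s2x]
  rw [h, mul_inv_rev, sinv, mul_inv_rev, a2a]

lemma c3 : a3 * (a2 * a3⁻¹) * a3⁻¹ = (a3⁻¹ * a2)⁻¹ := by
  have h : a3 * (a2 * a3⁻¹) * a3⁻¹ = a3 * a2 * (a3⁻¹ * a3⁻¹) := by group
  rw [h, yy]
  have h2 : a3 * a2 * (a3 * a3) = a3 * (a2 * a3) * a3 := by group
  rw [h2, R1, mul_inv_rev, inv_inv, a2inv]

lemma c4 : a3 * (a3⁻¹ * a2) * a3⁻¹ = a2 * a3⁻¹ := by group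

lemma c5 : a3⁻¹ * (a2 * a3⁻¹) * a3 = a3⁻¹ * a2 := by group

lemma c6 : a3⁻¹ * (a3⁻¹ * a2) * a3 = (a2 * a3⁻¹)⁻¹ := by
  have h : a3⁻¹ * (a3⁻¹ * a2) * a3 = a3⁻¹ * a3⁻¹ * (a2 * a3) := by group
  rw [h, yy, R1, mul_inv_rev, inv_inv, a2inv]
  group

/-! Lifting to `OmegaSG`. -/

lemma coe_lift : ((A2 * A3⁻¹ : OmegaSG) : Equiv.Perm Wd) = a2 * a3⁻¹ := rfl

lemma commΩ : (A2 * A3⁻¹) * (A3⁻¹ * A2) = (A3⁻¹ * A2) * (A2 * A3⁻¹) := Subtype.ext commP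

lemma c1Ω : A1 * (A2 * A3⁻¹) * A1⁻¹ = (A2 * A3⁻¹)⁻¹ := Subtype.ext c1
lemma c2Ω : A1 * (A3⁻¹ * A2) * A1⁻¹ = (A3⁻¹ * A2)⁻¹ := Subtype.ext c2
lemma c3Ω : A3 * (A2 * A3⁻¹) * A3⁻¹ = (A3⁻¹ * A2)⁻¹ := Subtype.ext c3
lemma c4Ω : A3 * (A3⁻¹ * A2) * A3⁻¹ = A2 * A3⁻¹ := Subtype.ext c4
lemma c5Ω : A3⁻¹ * (A2 * A3⁻¹) * A3 = A3⁻¹ * A2 := Subtype.ext c5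
lemma c6Ω : A3⁻¹ * (A3⁻¹ * A2) * A3 = (A2 * A3⁻¹)⁻¹ := Subtype.ext c6
lemma A1invΩ : A1⁻¹ = A1 := Subtype.ext sinv

instance : T2Space (Equiv.Perm Wd) := by
  have : Topology.IsEmbedding (fun g : Equiv.Perm Wd => (g : Wd → Wd)) :=
    ⟨⟨rfl⟩, fun g h hgh => Equiv.coe_fn_injective hgh⟩
  exact this.t2Space

/-- The closed subgroup generated by `γ₁` and `γ₂`. -/
noncomputable def Vgrp : Subgroup OmegaSG :=
  (Subgroup.closure {A2 * A3⁻¹, A3⁻¹ * A2}).topologicalClosure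

lemma isClosed_V : IsClosed (Vgrp : Set OmegaSG) :=
  Subgroup.isClosed_topologicalClosure _

lemma g1_mem_V : A2 * A3⁻¹ ∈ Vgrp :=
  Subgroup.le_topologicalClosure _ (Subgroup.subset_closure (Set.mem_insert _ _))

lemma g2_mem_V : A3⁻¹ * A2 ∈ Vgrp :=
  Subgroup.le_topologicalClosure _ (Subgroup.subset_closure (Set.mem_insert_of_mem _ rfl))

lemma conj_V_stable (g : OmegaSG) (h1 : g * (A2 * A3⁻¹) * g⁻¹ ∈ Vgrp)
    (h2 : g * (A3⁻¹ * A2) * g⁻¹ ∈ Vgrp) : ∀ v ∈ Vgrp, g * v * g⁻¹ ∈ Vgrp := by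
  set ψ : OmegaSG →* OmegaSG := (MulAut.conj g).toMonoidHom with hψ
  have hψa : ∀ v : OmegaSG, ψ v = g * v * g⁻¹ := fun v => rfl
  have hcont : Continuous ψ := by
    have : Continuous (fun v : OmegaSG => g * v * g⁻¹) :=
      (continuous_const.mul continuous_id).mul continuous_const
    exact this
  have hle : Vgrp ≤ Vgrp.comap ψ := by
    apply Subgroup.topologicalClosure_minimal
    · rw [Subgroup.closure_le]
      rintro x (rfl | rfl)
      · simpa [Subgroup.mem_comap, hψa] using h1
      · simpa [Subgroup.mem_comap, hψa] using h2
    · have : (Vgrp.comap ψ : Set OmegaSG) = ψ ⁻¹' (Vgrp : Set OmegaSG) := rfl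
      rw [this]
      exact isClosed_V.preimage hcont
  intro v hv
  have := hle hv
  rwa [Subgroup.mem_comap, hψa] at this

/-- The subgroup of elements normalizing `Vgrp` in both directions. -/
noncomputable def Nsub : Subgroup OmegaSG where
  carrier := {g | ∀ v ∈ Vgrp, g * v * g⁻¹ ∈ Vgrp ∧ g⁻¹ * v * g ∈ Vgrp}
  one_mem' := by
    intro v hv
    constructor <;> simpa using hv
  mul_mem' := by
    intro a b ha hb v hv
    constructor
    · have h := (ha _ (hb v hv).1).1
      rw [show a * (b * v * b⁻¹) * a⁻¹ = (a * b) * v * (a * b)⁻¹ by group] at h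
      exact h
    · have h := (hb _ (ha v hv).2).2
      rw [show b⁻¹ * (a⁻¹ * v * a) * b = (a * b)⁻¹ * v * (a * b) by group] at h
      exact h
  inv_mem' := by
    intro a ha v hv
    refine ⟨?_, ?_⟩
    · have h := (ha v hv).2
      rw [show a⁻¹ * v * a = a⁻¹ * v * a⁻¹⁻¹ by rw [inv_inv]] at h
      exact h
    · have h := (ha v hv).1
      rw [show a * v * a⁻¹ = a⁻¹⁻¹ * v * a⁻¹ by rw [inv_inv]] at h
      exact h

lemma isClosed_N : IsClosed (Nsub : Set OmegaSG) := by
  have he : (Nsub : Set OmegaSG) = ⋂ (v : OmegaSG) (_ : v ∈ Vgrp),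
      ((fun g : OmegaSG => g * v * g⁻¹) ⁻¹' (Vgrp : Set OmegaSG) ∩
       (fun g : OmegaSG => g⁻¹ * v * g) ⁻¹' (Vgrp : Set OmegaSG)) := by
    ext g
    simp only [Set.mem_iInter, Set.mem_inter_iff, Set.mem_preimage]
    rfl
  rw [he]
  refine isClosed_iInter fun v => isClosed_iInter fun hv => IsClosed.inter ?_ ?_
  · exact isClosed_V.preimage ((continuous_id.mul continuous_const).mul continuous_inv)
  · exact isClosed_V.preimage ((continuous_inv.mul continuous_const).mul continuous_id)

lemma A1_mem_N : A1 ∈ Nsub := by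
  intro v hv
  have hc := conj_V_stable A1 (by rw [c1Ω]; exact inv_mem g1_mem_V)
    (by rw [c2Ω]; exact inv_mem g2_mem_V) v hv
  refine ⟨hc, ?_⟩
  rw [A1invΩ, show A1 * v * A1 = A1 * v * A1⁻¹ by rw [A1invΩ]]
  exact hc

lemma A3_mem_N : A3 ∈ Nsub := by
  intro v hv
  constructor
  · exact conj_V_stable A3 (by rw [c3Ω]; exact inv_mem g2_mem_V)
      (by rw [c4Ω]; exact g1_mem_V) v hv
  · have hc := conj_V_stable A3⁻¹
      (by rw [inv_inv, c5Ω]; exact g2_mem_V)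
      (by rw [inv_inv, c6Ω]; exact inv_mem g1_mem_V) v hv
    rwa [inv_inv] at hc

lemma Ggrp_le_N : Ggrp ≤ Nsub := by
  apply Subgroup.topologicalClosure_minimal
  · rw [Subgroup.closure_le]
    rintro x (rfl | rfl)
    · exact A1_mem_N
    · exact A3_mem_N
  · exact isClosed_N

lemma hA3G : A3 ∈ Ggrp :=
  Subgroup.le_topologicalClosure _ (Subgroup.subset_closure (Set.mem_insert_of_mem _ rfl))

lemma Ugrp_eq_V : Ugrp = Vgrp := by
  apply le_antisymm
  · apply Subgroup.topologicalClosure_minimal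
    · rw [Subgroup.closure_le]
      rintro x ⟨g, hg, rfl⟩
      exact (Ggrp_le_N hg _ g1_mem_V).1
    · exact isClosed_V
  · apply Subgroup.topologicalClosure_minimal
    · rw [Subgroup.closure_le]
      rintro x (rfl | rfl)
      · refine Subgroup.le_topologicalClosure _ (Subgroup.subset_closure ⟨1, one_mem _, by group⟩)
      · refine Subgroup.le_topologicalClosure _
          (Subgroup.subset_closure ⟨A3⁻¹, inv_mem hA3G, by group⟩)
    · exact Subgroup.isClosed_topologicalClosure _

lemma V_comm : ∀ x ∈ Vgrp, ∀ y ∈ Vgrp, x * y = y * x := by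
  set S : Subgroup OmegaSG := Subgroup.closure {A2 * A3⁻¹, A3⁻¹ * A2} with hS
  have hbase : ∀ x ∈ S, ∀ y ∈ S, x * y = y * x := by
    intro x hx y hy
    have : Commute x y := by
      induction hx, hy using Subgroup.closure_induction₂ with
      | mem x y hx hy =>
        rcases hx with rfl | rfl <;> rcases hy with rfl | rfl
        · exact Commute.refl _
        · exact commΩ
        · exact commΩ.symm
        · exact Commute.refl _
      | one_left x hx => exact Commute.one_left x
      | one_right x hx => exact Commute.one_right x
      | mul_left x y z hx hy hz h₁ h₂ => exact h₁.mul_left h₂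
      | mul_right y z x hy hz hx h₁ h₂ => exact h₁.mul_right h₂
      | inv_left x y hx hy h => exact h.inv_left
      | inv_right x y hx hy h => exact h.inv_right
    exact this
  have k1 : ∀ y ∈ (S : Set OmegaSG), ∀ x ∈ closure (S : Set OmegaSG), x * y = y * x := by
    intro y hy
    have hcl : IsClosed {x : OmegaSG | x * y = y * x} :=
      isClosed_eq (continuous_id.mul continuous_const) (continuous_const.mul continuous_id)
    intro x hx
    exact closure_minimal (fun z hz => hbase z hz y hy) hcl hx
  intro x hx y hy
  have hx' : x ∈ closure (S : Set OmegaSG) := hx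
  have hy' : y ∈ closure (S : Set OmegaSG) := hy
  have hcl : IsClosed {y : OmegaSG | x * y = y * x} :=
    isClosed_eq (continuous_const.mul continuous_id) (continuous_id.mul continuous_const)
  exact closure_minimal (fun z hz => k1 z hz x hx') hcl hy'


/-- `γ₁ = a₂a₃⁻¹` and `γ₂ = a₃⁻¹a₂` commute; consequently
`U = ⟨⟨γ₁, γ₂⟩⟩` is abelian. -/
theorem stmt8 :
    (A2 * A3⁻¹) * (A3⁻¹ * A2) = (A3⁻¹ * A2) * (A2 * A3⁻¹) ∧
    (Ugrp = (Subgroup.closure {A2 * A3⁻¹, A3⁻¹ * A2}).topologicalClosure) ∧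
    (∀ x ∈ Ugrp, ∀ y ∈ Ugrp, x * y = y * x) := by
  refine ⟨commΩ, Ugrp_eq_V, ?_⟩
  intro x hx y hy
  rw [Ugrp_eq_V] at hx hy
  exact V_comm x hx y hy
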